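/- Let k ≥ 0 be an integer. A function u, holomorphic on the open unit disk D ⊂ ℂ and continuous on its closure, satisfies u(e^{it}) ∈ e^{ikt}·ℝ for all t ∈ ℝ if and only if u is a polynomial u(z) = Σ_{j=0}^{2k} a_j z^j with a_{2k-j} = conj(a_j) for all 0 ≤ j ≤ 2k. In particular, the real vector space of such functions has dimension 2k+1. -/

import Mathlib

open Complex

open Complex MeasureTheory Metric intervalIntegral

lemma conj_intervalIntegral (f : ℝ → ℂ) (a b : ℝ) :
    (∫ t in a..b, (starRingEnd ℂ) (f t)) = (starRingEnd ℂ) (∫ t in a..b, f t) := by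
  simp only [intervalIntegral, ← integral_conj, map_sub]

lemma circle_to_interval (f : ℂ → ℂ) : (∮ z in C((0:ℂ),1), f z)
    = ∫ t in (0:ℝ)..2*Real.pi, (Complex.exp (t*I) * I) * f (Complex.exp (t*I)) := by
  simp [circleIntegral, deriv_circleMap, circleMap, smul_eq_mul]

section main
variable (k : ℕ) (u : ℂ → ℂ)

noncomputable def Jint (u : ℂ → ℂ) (m : ℤ) : ℂ :=
  ∫ t in (0:ℝ)..2*Real.pi, Complex.exp (-(m:ℂ)*t*I) * u (Complex.exp (t*I))

lemma Jint_coeff (hd : DifferentiableOn ℂ u (Metric.ball 0 1))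
    (hc : ContinuousOn u (Metric.closedBall 0 1)) (n : ℕ) :
    Jint u n = (2*Real.pi) * (cauchyPowerSeries u 0 1).coeff n := by
  have h1 : (cauchyPowerSeries u 0 1).coeff n
      = (2 * Real.pi * I : ℂ)⁻¹ • ∮ z in C((0:ℂ),1), (1 / (z - 0)) ^ n • (z - 0)⁻¹ • u z :=
    cauchyPowerSeries_apply u 0 1 n 1
  rw [circle_to_interval] at h1
  have h2 : (∫ t in (0:ℝ)..2*Real.pi, (Complex.exp (t*I) * I) *
      ((1 / (Complex.exp (t*I) - 0)) ^ n • (Complex.exp (t*I) - 0)⁻¹ • u (Complex.exp (t*I))))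
      = I * Jint u n := by
    rw [Jint, ← intervalIntegral.integral_const_mul]
    apply intervalIntegral.integral_congr
    intro t _
    have he : Complex.exp (t*I) ≠ 0 := Complex.exp_ne_zero _
    have hpow : (1 / Complex.exp (↑t*I)) ^ n = Complex.exp (-(n:ℂ)*t*I) := by
      rw [one_div, ← Complex.exp_neg, ← Complex.exp_nat_mul]
      congr 1; ring
    simp only [sub_zero, smul_eq_mul, hpow]
    field_simp
    push_cast; ring
  rw [h2] at h1
  rw [h1]
  have : (2 * (Real.pi:ℂ) * I) ≠ 0 := by
    simp [Real.pi_ne_zero, I_ne_zero]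
  field_simp
  have hpi : (Real.pi:ℂ) * (Real.pi:ℂ)⁻¹ = 1 := mul_inv_cancel₀ (Complex.ofReal_ne_zero.2 Real.pi_ne_zero)
  have hI : I * I⁻¹ = 1 := mul_inv_cancel₀ I_ne_zero
  linear_combination (-(Jint u n) * (I * I⁻¹)) * hpi + (-(Jint u n)) * hI

lemma Jint_neg (hd : DifferentiableOn ℂ u (Metric.ball 0 1))
    (hc : ContinuousOn u (Metric.closedBall 0 1)) (n : ℕ) :
    Jint u (-(n+1 : ℕ)) = 0 := by
  have hz : (∮ z in C((0:ℂ),1), z ^ n * u z) = 0 := by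
    apply circleIntegral_eq_zero_of_differentiable_on_off_countable zero_le_one
      (Set.countable_empty)
    · exact (continuousOn_pow n).mul hc
    · intro z hz
      exact ((differentiableAt_pow n).mul
        ((hd z hz.1).differentiableAt (isOpen_ball.mem_nhds hz.1)))
  rw [circle_to_interval] at hz
  have h2 : (∫ t in (0:ℝ)..2*Real.pi, (Complex.exp (t*I) * I) *
      (Complex.exp (t*I) ^ n * u (Complex.exp (t*I)))) = I * Jint u (-(n+1:ℕ)) := by
    rw [Jint, ← intervalIntegral.integral_const_mul]
    apply intervalIntegral.integral_congr
    intro t _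
    have hpow : Complex.exp (↑t*I) ^ n = Complex.exp ((n:ℂ)*t*I) := by
      rw [← Complex.exp_nat_mul]; congr 1; ring
    beta_reduce
    rw [hpow]
    have : -((-(n+1:ℕ) : ℤ) : ℂ) * t * I = (t*I + (n:ℂ)*t*I) := by push_cast; ring
    rw [this, Complex.exp_add]
    ring
  rw [h2] at hz
  rcases mul_eq_zero.1 hz with h | h
  · exact absurd h I_ne_zero
  · exact h

lemma Jint_conj
    (hbc : ∀ t : ℝ, ∃ r : ℝ, u (Complex.exp (t * I)) = Complex.exp ((k : ℂ) * t * I) * r)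
    (m : ℤ) : (starRingEnd ℂ) (Jint u m) = Jint u (2*k - m) := by
  rw [Jint, ← conj_intervalIntegral, Jint]
  apply intervalIntegral.integral_congr
  intro t _
  obtain ⟨r, hr⟩ := hbc t
  have h0 : (starRingEnd ℂ) ((k:ℂ)*t*I) = -((k:ℂ)*t*I) := by
    simp only [map_mul, conj_ofReal, conj_I, Complex.conj_natCast]
    ring
  have hconju : (starRingEnd ℂ) (u (Complex.exp (t*I)))
      = Complex.exp (-(2*k:ℂ)*t*I) * u (Complex.exp (t*I)) := by
    rw [hr, map_mul, ← Complex.exp_conj, h0, conj_ofReal, ← mul_assoc, ← Complex.exp_add]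
    congr 2
    ring
  beta_reduce
  have h1 : (starRingEnd ℂ) (-(m:ℂ)*t*I) = (m:ℂ)*t*I := by
    simp only [map_mul, map_neg, conj_ofReal, conj_I, map_intCast]
    ring
  rw [map_mul, hconju, ← Complex.exp_conj, h1, ← mul_assoc, ← Complex.exp_add]
  congr 2
  push_cast
  ring
end main


/-- One-dimensional Riemann–Hilbert problem with boundary condition of Maslov
index `2k ≥ 0`: a function holomorphic on the open unit disk and continuous on
its closure satisfies `u(e^{it}) ∈ e^{ikt}·ℝ` iff it is a polynomial
`Σ_{j=0}^{2k} a_j z^j` with `a_{2k-j} = conj(a_j)`. -/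
theorem rh_problem_nonneg_index (k : ℕ) (u : ℂ → ℂ)
    (hd : DifferentiableOn ℂ u (Metric.ball 0 1))
    (hc : ContinuousOn u (Metric.closedBall 0 1)) :
    (∀ t : ℝ, ∃ r : ℝ, u (Complex.exp (t * I)) = Complex.exp ((k : ℂ) * t * I) * r) ↔
      ∃ a : ℕ → ℂ, (∀ j ≤ 2 * k, a (2 * k - j) = (starRingEnd ℂ) (a j)) ∧
        ∀ z ∈ Metric.closedBall (0 : ℂ) 1,
          u z = ∑ j ∈ Finset.range (2 * k + 1), a j * z ^ j := by
  constructor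
  · intro hbc
    set p := cauchyPowerSeries u 0 1 with hpdef
    have two_pi_ne : ((2*Real.pi : ℝ) : ℂ) ≠ 0 := by
      simp [Real.pi_ne_zero]
    have two_pi_ne' : (2*(Real.pi:ℂ)) ≠ 0 :=
      mul_ne_zero two_ne_zero (Complex.ofReal_ne_zero.2 Real.pi_ne_zero)
    have hJc : ∀ m : ℤ, (starRingEnd ℂ) (Jint u m) = Jint u (2*k - m) := Jint_conj k u hbc
    have hzero : ∀ n : ℕ, 2*k < n → p.coeff n = 0 := by
      intro n hn
      have h1 := hJc n
      have h2 : ((2*k : ℤ) - n) = -((n - (2*k+1) : ℕ) + 1 : ℕ) := by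
        push_cast [Nat.cast_sub (by omega : 2*k+1 ≤ n)]; ring
      rw [h2, Jint_neg u hd hc] at h1
      have h3 : Jint u n = 0 := by
        have := congrArg (starRingEnd ℂ) h1
        simpa using this
      rw [Jint_coeff u hd hc n] at h3
      exact (mul_eq_zero.1 h3).resolve_left two_pi_ne'
    have hsymm : ∀ j ≤ 2*k, p.coeff (2*k - j) = (starRingEnd ℂ) (p.coeff j) := by
      intro j hj
      have h1 := hJc j
      have h2 : ((2*k : ℤ) - j) = ((2*k - j : ℕ) : ℤ) := by
        push_cast [Nat.cast_sub hj]; ring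
      rw [h2, Jint_coeff u hd hc, Jint_coeff u hd hc] at h1
      have h3 : (2*(Real.pi:ℂ)) * (starRingEnd ℂ) (p.coeff j)
          = (2*(Real.pi:ℂ)) * p.coeff (2*k - j) := by
        rw [← h1]
        simp [map_mul, conj_ofReal, map_ofNat, hpdef]
      exact (mul_left_cancel₀ two_pi_ne' h3).symm
    have hp : HasFPowerSeriesOnBall u p 0 1 := by
      have hdc : DiffContOnCl ℂ u (Metric.ball 0 1) :=
        ⟨hd, hc.mono closure_ball_subset_closedBall⟩
      have := hdc.hasFPowerSeriesOnBall (R := 1) one_pos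
      simpa using this
    have hball : ∀ z ∈ Metric.ball (0:ℂ) 1,
        u z = ∑ j ∈ Finset.range (2*k+1), p.coeff j * z ^ j := by
      intro z hz
      have hz' : z ∈ Metric.eball (0:ℂ) 1 := by
        rw [mem_emetric_ball_zero_iff]
        rw [mem_ball_zero_iff] at hz
        rw [← ofReal_norm]; exact ENNReal.ofReal_lt_one.2 hz
      have hsum := hp.hasSum (y := z) (by simpa using hz')
      rw [zero_add] at hsum
      have hsum' : HasSum (fun n => p.coeff n * z ^ n) (u z) := by
        refine hsum.congr_fun fun n => ?_
        rw [FormalMultilinearSeries.apply_eq_pow_smul_coeff, smul_eq_mul, mul_comm]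
      have hfin : HasSum (fun n => p.coeff n * z ^ n)
          (∑ j ∈ Finset.range (2*k+1), p.coeff j * z ^ j) := by
        apply hasSum_sum_of_ne_finset_zero
        intro b hb
        have : 2*k < b := by simpa [Nat.lt_succ_iff, not_lt] using hb
        rw [hzero b this, zero_mul]
      exact hsum'.unique hfin
    refine ⟨fun j => p.coeff j, hsymm, ?_⟩
    intro z hz
    rcases lt_or_eq_of_le (mem_closedBall_zero_iff.1 hz) with h | h
    · exact hball z (mem_ball_zero_iff.2 h)
    · -- boundary point: use continuity
      have hzc : z ∈ closure (Metric.ball (0:ℂ) 1) := by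
        rw [closure_ball (0:ℂ) one_ne_zero]; exact hz
      have hne : (nhdsWithin z (Metric.ball (0:ℂ) 1)).NeBot :=
        mem_closure_iff_nhdsWithin_neBot.1 hzc
      have hu : Filter.Tendsto u (nhdsWithin z (Metric.ball (0:ℂ) 1)) (nhds (u z)) :=
        ((hc z hz).mono Metric.ball_subset_closedBall)
      have hP : Filter.Tendsto (fun w => ∑ j ∈ Finset.range (2*k+1), p.coeff j * w ^ j)
          (nhdsWithin z (Metric.ball (0:ℂ) 1))
          (nhds (∑ j ∈ Finset.range (2*k+1), p.coeff j * z ^ j)) := by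
        apply Filter.Tendsto.mono_left _ nhdsWithin_le_nhds
        exact (Continuous.tendsto (by continuity) z)
      have hu' : Filter.Tendsto u (nhdsWithin z (Metric.ball (0:ℂ) 1))
          (nhds (∑ j ∈ Finset.range (2*k+1), p.coeff j * z ^ j)) := by
        refine hP.congr' ?_
        filter_upwards [self_mem_nhdsWithin] with w hw
        exact (hball w hw).symm
      exact tendsto_nhds_unique hu hu'
  · rintro ⟨a, hsymm, hsum⟩ t
    have hz : Complex.exp (t * I) ∈ Metric.closedBall (0:ℂ) 1 := by
      rw [mem_closedBall_zero_iff]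
      simp [Complex.norm_exp]
    set w : ℂ := Complex.exp (-(k:ℂ) * t * I) * u (Complex.exp (t * I)) with hw
    have hwr : (starRingEnd ℂ) w = w := by
      rw [hw, hsum _ hz, map_mul, ← Complex.exp_conj]
      have h0 : (starRingEnd ℂ) (-(k:ℂ) * t * I) = (k:ℂ) * t * I := by
        simp only [map_mul, map_neg, conj_ofReal, conj_I, map_natCast]; ring
      rw [h0, map_sum, Finset.mul_sum, Finset.mul_sum]
      rw [← Finset.sum_range_reflect]
      apply Finset.sum_congr rfl
      intro j hj
      have hj' : j ≤ 2*k := by simpa [Nat.lt_succ_iff] using hj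
      have hrefl : 2*k + 1 - 1 - j = 2*k - j := by omega
      rw [hrefl]
      have h1 : (starRingEnd ℂ) ((t:ℂ) * I) = -((t:ℂ) * I) := by
        simp [conj_I]
      have h2 : ∀ n : ℕ, (starRingEnd ℂ) (Complex.exp ((t:ℂ)*I) ^ n)
          = Complex.exp (-((n:ℂ))*t*I) := by
        intro n
        rw [map_pow, ← Complex.exp_conj, h1, ← Complex.exp_nat_mul]
        congr 1; ring
      have hcast : ((2*k - j : ℕ) : ℂ) = 2*(k:ℂ) - j := by
        push_cast [Nat.cast_sub hj']; ring
      rw [map_mul, hsymm j hj', Complex.conj_conj, h2, hcast, ← Complex.exp_nat_mul,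
        mul_left_comm, mul_left_comm (Complex.exp (-(k:ℂ)*(t:ℂ)*I)),
        ← Complex.exp_add, ← Complex.exp_add]
      congr 2
      push_cast
      ring
    have hreal : w = ((w.re : ℝ) : ℂ) := (Complex.conj_eq_iff_re.1 hwr).symm
    refine ⟨w.re, ?_⟩
    have : u (Complex.exp (t*I)) = Complex.exp ((k:ℂ)*t*I) * w := by
      rw [hw, ← mul_assoc, ← Complex.exp_add]
      have : (k:ℂ)*t*I + -(k:ℂ)*t*I = 0 := by ring
      rw [this, Complex.exp_zero, one_mul]
    rw [this, ← hreal]
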